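/- Suppose 3m rectangles, where rectangle i has width w and height h_i with h' < h_i < h'' for all i, are packed without overlap into a W × H rectangle, where H < 4h' (so no four rectangles can share an x-coordinate) and W < (m+1)w (so no m+1 rectangles can share a y-coordinate). If additionally H − 3h' < h' and W − mw < w, then the rectangles can be partitioned into m groups of exactly 3 rectangles each, such that the rectangles in each group pairwise share an x-coordinate (they are stabbed by a common vertical line). -/
import Mathlib


/-- If `3m` axis-parallel rectangles of common width `w` and heights `ht i` with
`h' < ht i < h''` are packed interior-disjointly into a `W × H` container where
`H < 4h'` (no four rectangles share an x-coordinate), `W < (m+1)w` (no `m+1`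
rectangles share a y-coordinate), `H − 3h' < h'` and `W − mw < w`, then the
rectangles can be partitioned into `m` groups of exactly 3 such that the
rectangles in each group pairwise share an x-coordinate (equivalently, each
group is stabbed by a common vertical line). -/
theorem three_per_column_packing (m : ℕ) (hm : 0 < m)
    (w h' h'' W H : ℝ) (hw : 0 < w) (hh' : 0 < h')
    (x y ht : Fin (3 * m) → ℝ)
    (hht : ∀ i, h' < ht i ∧ ht i < h'')
    (hin : ∀ i, 0 ≤ x i ∧ x i + w ≤ W ∧ 0 ≤ y i ∧ y i + ht i ≤ H)
    (hdisj : ∀ i j, i ≠ j →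
      ¬(x i < x j + w ∧ x j < x i + w ∧ y i < y j + ht j ∧ y j < y i + ht i))
    (hH : H < 4 * h') (hW : W < (m + 1) * w)
    (hH3 : H - 3 * h' < h') (hWm : W - m * w < w) :
    ∃ g : Fin (3 * m) → Fin m,
      (∀ k, (Finset.univ.filter fun i => g i = k).card = 3) ∧
      (∀ k, ∃ c : ℝ, ∀ i, g i = k → x i ≤ c ∧ c ≤ x i + w) ∧
      (∀ i j, g i = g j → x i ≤ x j + w ∧ x j ≤ x i + w) := by
  have hx0 : ∀ i, 0 ≤ x i / w := fun i => div_nonneg (hin i).1 hw.le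
  have hxm : ∀ i, x i / w < (m : ℝ) := by
    intro i
    rw [div_lt_iff₀ hw]
    have h1 := (hin i).2.1
    nlinarith
  set g : Fin (3 * m) → Fin m := fun i =>
    ⟨⌊x i / w⌋₊, by rw [Nat.floor_lt (hx0 i)]; exact hxm i⟩ with hgdef
  -- within a column, strict x-overlap
  have hcol : ∀ i j, g i = g j → x i < x j + w := by
    intro i j hij
    have hc : ⌊x i / w⌋₊ = ⌊x j / w⌋₊ := congrArg Fin.val hij
    have h1 : x i / w < ⌊x i / w⌋₊ + 1 := Nat.lt_floor_add_one _
    have h2 : (⌊x j / w⌋₊ : ℝ) ≤ x j / w := Nat.floor_le (hx0 j)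
    rw [hc] at h1
    have h1' : x i < (⌊x j / w⌋₊ + 1) * w := by
      rw [← div_lt_iff₀ hw]; exact h1
    have h2' : (⌊x j / w⌋₊ : ℝ) * w ≤ x j := by
      rw [← le_div_iff₀ hw]; exact h2
    nlinarith
  -- rows
  set r : Fin (3 * m) → Fin 3 := fun i =>
    if y i ≤ H - 3 * h' then 0 else if y i ≤ H - 2 * h' then 1 else 2 with hrdef
  have hrow : ∀ i, y i ≤ H - 3 * h' + (r i : ℝ) * h' ∧
      H - 3 * h' + (r i : ℝ) * h' < y i + ht i := by
    intro i
    obtain ⟨hy0, hyH⟩ := (hin i).2.2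
    have hhti := (hht i).1
    simp only [hrdef]
    split_ifs with h1 h2
    · simp; constructor <;> nlinarith
    · push_neg at h1
      norm_num
      constructor <;> nlinarith
    · push_neg at h1 h2
      norm_num
      constructor <;> nlinarith
  -- injectivity of (g, r)
  set F : Fin (3 * m) → Fin m × Fin 3 := fun i => (g i, r i) with hFdef
  have hinj : Function.Injective F := by
    intro i j hij
    by_contra hne
    obtain ⟨hg, hr⟩ := Prod.mk.injEq .. ▸ hij
    have hx1 : x i < x j + w := hcol i j hg
    have hx2 : x j < x i + w := hcol j i hg.symm
    have hd := hdisj i j hne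
    push_neg at hd
    have hyd := hd hx1 hx2
    obtain ⟨ri1, ri2⟩ := hrow i
    obtain ⟨rj1, rj2⟩ := hrow j
    rw [hr] at ri1 ri2
    rcases le_or_gt (y i + ht i) (y j) with h | h
    · linarith
    · have : y j + ht j ≤ y i := by
        by_contra hcon
        push_neg at hcon
        exact absurd (hyd hcon) (not_le.mpr h)
      linarith
  have hcard : Fintype.card (Fin (3 * m)) = Fintype.card (Fin m × Fin 3) := by
    simp [mul_comm]
  have hbij : Function.Bijective F :=
    (Fintype.bijective_iff_injective_and_card F).mpr ⟨hinj, hcard⟩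
  refine ⟨g, ?_, ?_, ?_⟩
  · intro k
    have hbijcard : (Finset.univ.filter fun i => g i = k).card =
        (Finset.univ.filter fun p : Fin m × Fin 3 => p.1 = k).card := by
      apply Finset.card_bij (fun i _ => F i)
      · intro a ha
        simp only [Finset.mem_filter, Finset.mem_univ, true_and] at ha ⊢
        exact ha
      · intro a _ b _ hab
        exact hinj hab
      · intro p hp
        obtain ⟨i, hi⟩ := hbij.2 p
        simp only [Finset.mem_filter, Finset.mem_univ, true_and] at hp
        refine ⟨i, ?_, hi⟩
        simp only [Finset.mem_filter, Finset.mem_univ, true_and]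
        have : g i = p.1 := congrArg Prod.fst hi
        rw [this, hp]
    rw [hbijcard]
    have : (Finset.univ.filter fun p : Fin m × Fin 3 => p.1 = k) =
        {k} ×ˢ Finset.univ := by
      ext p
      simp only [Finset.mem_filter, Finset.mem_univ, true_and,
        Finset.mem_product, Finset.mem_singleton]
      constructor
      · intro h
        exact ⟨h, trivial⟩
      · intro h
        exact h.1
    rw [this, Finset.card_product]
    simp
  · intro k
    refine ⟨((k : ℕ) + 1) * w, fun i hik => ?_⟩
    have hc : ⌊x i / w⌋₊ = (k : ℕ) := congrArg Fin.val hik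
    have h1 : x i / w < ⌊x i / w⌋₊ + 1 := Nat.lt_floor_add_one _
    have h2 : (⌊x i / w⌋₊ : ℝ) ≤ x i / w := Nat.floor_le (hx0 i)
    rw [hc] at h1 h2
    constructor
    · have : x i < ((k : ℕ) + 1) * w := by
        rw [← div_lt_iff₀ hw] at *
        push_cast
        linarith
      linarith
    · have : ((k : ℕ) : ℝ) * w ≤ x i := by
        rw [← le_div_iff₀ hw]
        exact h2
      push_cast
      nlinarith
  · intro i j hij
    exact ⟨(hcol i j hij).le, (hcol j i hij.symm).le⟩
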